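/- Let d_1, ..., d_n be i.i.d. Rademacher random variables, S ∈ ℝ^{n×n} with entries s_{i,j} of absolute value 1/√n and orthogonal rows, D = diag(d_1,...,d_n), and x, y ∈ ℝ^n. Then for any row index r, E[(SDx)_r² (SDy)_r²] = (1/n²)(‖x‖²‖y‖² + 2(x^T y)² − 2 ∑_{i=1}^n x_i² y_i²). -/

import Mathlib

open MeasureTheory ProbabilityTheory

/-- The Rademacher distribution: uniform on `{-1, 1} ⊆ ℝ`. -/
noncomputable def rademacherDist : Measure ℝ :=
  (1 / 2 : ENNReal) • Measure.dirac (1 : ℝ) + (1 / 2 : ENNReal) • Measure.dirac (-1 : ℝ)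

section Aux

lemma SD_sum_if_const {n : ℕ} {c : Prop} [Decidable c] (f : Fin n → ℝ) :
    (∑ k, if c then f k else 0) = if c then ∑ k, f k else 0 := by
  split <;> simp

lemma SD_sum2_congr {n : ℕ} (f g : Fin n → Fin n → ℝ) (h : ∀ i j, f i j = g i j) :
    ∑ i, ∑ j, f i j = ∑ i, ∑ j, g i j :=
  Finset.sum_congr rfl fun i _ => Finset.sum_congr rfl fun j _ => h i j

lemma SD_sum4_congr {n : ℕ} (f g : Fin n → Fin n → Fin n → Fin n → ℝ)
    (h : ∀ i j k l, f i j k l = g i j k l) :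
    ∑ i, ∑ j, ∑ k, ∑ l, f i j k l = ∑ i, ∑ j, ∑ k, ∑ l, g i j k l :=
  Finset.sum_congr rfl fun i _ => Finset.sum_congr rfl fun j _ =>
    Finset.sum_congr rfl fun k _ => Finset.sum_congr rfl fun l _ => h i j k l

noncomputable def SDM {n : ℕ} (i j k l : Fin n) : ℝ :=
  (if i = j then (1:ℝ) else 0) * (if k = l then 1 else 0)
    + (if i = k then 1 else 0) * (if j = l then 1 else 0)
    + (if i = l then 1 else 0) * (if j = k then 1 else 0)
    - 2 * ((if i = j then (1:ℝ) else 0) * ((if i = k then 1 else 0) * (if i = l then 1 else 0)))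


lemma SDM_diag {n : ℕ} (i k : Fin n) : SDM i i k k = 1 := by
  by_cases hik : i = k <;> simp [SDM, hik] <;> norm_num

lemma SDM_pair2 {n : ℕ} {i j : Fin n} (hij : i ≠ j) : SDM i j i j = 1 := by
  simp [SDM, hij, Ne.symm hij]

lemma SDM_pair3 {n : ℕ} {i j : Fin n} (hij : i ≠ j) : SDM i j j i = 1 := by
  simp [SDM, hij, Ne.symm hij]

lemma SDM_eq_zero {n : ℕ} {i j k l : Fin n} (h1 : ¬(i = j ∧ k = l))
    (h2 : ¬(i = k ∧ j = l)) (h3 : ¬(i = l ∧ j = k)) : SDM i j k l = 0 := by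
  unfold SDM
  by_cases hij : i = j <;> by_cases hkl : k = l <;> by_cases hik : i = k <;>
    by_cases hjl : j = l <;> by_cases hil : i = l <;> by_cases hjk : j = k <;>
    simp_all

lemma SD_comb {n : ℕ} (a b : Fin n → ℝ) :
    ∑ i, ∑ j, ∑ k, ∑ l, (a i * a j * (b k * b l)) * SDM i j k l
      = (∑ i, a i ^ 2) * (∑ i, b i ^ 2) + 2 * (∑ i, a i * b i) ^ 2
        - 2 * ∑ i, a i ^ 2 * b i ^ 2 := by
  simp only [SDM, mul_add, mul_sub, Finset.sum_add_distrib, Finset.sum_sub_distrib,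
    mul_ite, mul_one, mul_zero, ite_mul, one_mul, zero_mul, SD_sum_if_const,
    Finset.sum_ite_eq, Finset.sum_ite_eq', Finset.mem_univ, if_true]
  rw [sq (∑ i, a i * b i), Finset.sum_mul_sum, Finset.sum_mul_sum]
  rw [SD_sum2_congr _ (fun i j => a i ^ 2 * b j ^ 2) (fun i j => by ring)]
  rw [SD_sum2_congr (fun i j => a i * a j * (b j * b i)) (fun i j => a i * a j * (b i * b j))
    (fun i j => by ring)]
  rw [SD_sum2_congr (fun i j => a i * b i * (a j * b j)) (fun i j => a i * a j * (b i * b j))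
    (fun i j => by ring)]
  rw [Finset.sum_congr rfl
    (fun i _ => show a i * a i * (b i * b i) * 2 = 2 * (a i ^ 2 * b i ^ 2) by ring),
    ← Finset.mul_sum]
  ring

lemma SD_expand4 {n : ℕ} (f g : Fin n → ℝ) :
    (∑ i, f i) ^ 2 * (∑ i, g i) ^ 2
      = ∑ i, ∑ j, ∑ k, ∑ l, f i * f j * (g k * g l) := by
  calc (∑ i, f i) ^ 2 * (∑ i, g i) ^ 2
      = (∑ i, ∑ j, f i * f j) * (∑ k, ∑ l, g k * g l) := by
        rw [sq, sq, Finset.sum_mul_sum, Finset.sum_mul_sum]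
    _ = ∑ i, ∑ j, (f i * f j) * (∑ k, ∑ l, g k * g l) := by
        rw [Finset.sum_mul]
        exact Finset.sum_congr rfl fun i _ => Finset.sum_mul ..
    _ = ∑ i, ∑ j, ∑ k, ∑ l, f i * f j * (g k * g l) := by
        refine Finset.sum_congr rfl fun i _ => Finset.sum_congr rfl fun j _ => ?_
        rw [Finset.mul_sum]
        exact Finset.sum_congr rfl fun k _ => Finset.mul_sum ..

lemma SD_integrable_id_dirac (a : ℝ) : Integrable (fun t : ℝ => t) (Measure.dirac a) :=
  (integrable_const a).congr (MeasureTheory.ae_eq_dirac (fun t : ℝ => t)).symm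

lemma SD_radem_mean : ∫ t, t ∂rademacherDist = 0 := by
  rw [rademacherDist, integral_add_measure ((SD_integrable_id_dirac 1).smul_measure (by norm_num))
    ((SD_integrable_id_dirac (-1)).smul_measure (by norm_num)),
    integral_smul_measure, integral_smul_measure, integral_dirac, integral_dirac]
  norm_num

lemma SD_ae_pm {Ω : Type*} [MeasurableSpace Ω] (μ : Measure Ω)
    (f : Ω → ℝ) (hm : Measurable f) (hd : Measure.map f μ = rademacherDist) :
    ∀ᵐ ω ∂μ, f ω = 1 ∨ f ω = -1 := by
  have hs : MeasurableSet ({1, -1} : Set ℝ) := by measurability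
  have h0 : μ (f ⁻¹' ({1, -1} : Set ℝ)ᶜ) = 0 := by
    have h1 : Measure.map f μ ({1, -1} : Set ℝ)ᶜ = 0 := by
      rw [hd, rademacherDist]
      simp [Measure.dirac_apply' _ hs.compl]
    rwa [Measure.map_apply hm hs.compl] at h1
  rw [ae_iff]
  convert h0 using 2
  ext ω; simp

lemma SD_integral_sum4 {Ω : Type*} [MeasurableSpace Ω] (μ : Measure Ω) {n : ℕ}
    (F : Fin n → Fin n → Fin n → Fin n → Ω → ℝ)
    (hF : ∀ i j k l, Integrable (F i j k l) μ) :
    ∫ ω, ∑ i, ∑ j, ∑ k, ∑ l, F i j k l ω ∂μ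
      = ∑ i, ∑ j, ∑ k, ∑ l, ∫ ω, F i j k l ω ∂μ := by
  rw [integral_finset_sum _ (fun i _ => integrable_finset_sum _ (fun j _ =>
    integrable_finset_sum _ (fun k _ => integrable_finset_sum _ (fun l _ => hF i j k l))))]
  refine Finset.sum_congr rfl fun i _ => ?_
  rw [integral_finset_sum _ (fun j _ =>
    integrable_finset_sum _ (fun k _ => integrable_finset_sum _ (fun l _ => hF i j k l)))]
  refine Finset.sum_congr rfl fun j _ => ?_
  rw [integral_finset_sum _ (fun k _ => integrable_finset_sum _ (fun l _ => hF i j k l))]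
  refine Finset.sum_congr rfl fun k _ => ?_
  rw [integral_finset_sum _ (fun l _ => hF i j k l)]

end Aux

theorem SD_row_fourth_moment
    {Ω : Type*} [MeasurableSpace Ω] (μ : Measure Ω) [IsProbabilityMeasure μ]
    (n : ℕ) (hn : 0 < n)
    (S : Matrix (Fin n) (Fin n) ℝ)
    (horth : S * S.transpose = 1)
    (hent : ∀ a b, |S a b| = 1 / Real.sqrt n)
    (d : Fin n → Ω → ℝ)
    (hmeas : ∀ i, Measurable (d i))
    (hindep : iIndepFun d μ)
    (hdist : ∀ i, Measure.map (d i) μ = rademacherDist)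
    (x y : Fin n → ℝ) (r : Fin n) :
    ∫ ω, (∑ i, S r i * d i ω * x i) ^ 2 * (∑ i, S r i * d i ω * y i) ^ 2 ∂μ
      = (1 / (n : ℝ) ^ 2) *
          ((∑ i, x i ^ 2) * (∑ i, y i ^ 2) + 2 * (∑ i, x i * y i) ^ 2
            - 2 * ∑ i, x i ^ 2 * y i ^ 2) := by
  have hae : ∀ i, ∀ᵐ ω ∂μ, d i ω = 1 ∨ d i ω = -1 :=
    fun i => SD_ae_pm μ (d i) (hmeas i) (hdist i)
  -- integrability of quadruple products
  have hint4 : ∀ i j k l : Fin n,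
      Integrable (fun ω => d i ω * d j ω * (d k ω * d l ω)) μ := by
    intro i j k l
    refine Integrable.mono' (integrable_const (1 : ℝ))
      (((hmeas i).mul (hmeas j)).mul ((hmeas k).mul (hmeas l))).aestronglyMeasurable ?_
    filter_upwards [hae i, hae j, hae k, hae l] with ω h1 h2 h3 h4
    rcases h1 with h1|h1 <;> rcases h2 with h2|h2 <;> rcases h3 with h3|h3 <;>
      rcases h4 with h4|h4 <;> rw [h1, h2, h3, h4] <;> norm_num
  -- first moment
  have hE1 : ∀ i, ∫ ω, d i ω ∂μ = 0 := by
    intro i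
    have h := integral_map (μ := μ) (φ := d i) (hmeas i).aemeasurable
      (f := fun t : ℝ => t) measurable_id.aestronglyMeasurable
    rw [hdist i, SD_radem_mean] at h
    exact h.symm
  -- second mixed moment
  have hE2 : ∀ i j : Fin n, i ≠ j → ∫ ω, d i ω * d j ω ∂μ = 0 := by
    intro i j hij
    rw [(hindep.indepFun hij).integral_fun_mul_eq_mul_integral (hmeas i).aestronglyMeasurable
      (hmeas j).aestronglyMeasurable, hE1 i, zero_mul]
  -- reduction helpers
  have hconst1 : ∀ F : Ω → ℝ, (∀ᵐ ω ∂μ, F ω = 1) → ∫ ω, F ω ∂μ = 1 := by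
    intro F h
    rw [integral_congr_ae (g := fun _ => (1:ℝ)) h, integral_const]
    simp
  have hred : ∀ (F : Ω → ℝ) (p q : Fin n), p ≠ q →
      (F =ᵐ[μ] fun ω => d p ω * d q ω) → ∫ ω, F ω ∂μ = 0 := by
    intro F p q hpq h
    rw [integral_congr_ae h, hE2 p q hpq]
  -- fourth mixed moments
  have hquad : ∀ i j k l : Fin n,
      ∫ ω, d i ω * d j ω * (d k ω * d l ω) ∂μ = SDM i j k l := by
    intro i j k l
    by_cases hij : i = j
    · subst hij
      by_cases hkl : k = l
      · subst hkl
        rw [hconst1 _ ?_]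
        · exact (SDM_diag i k).symm
        · filter_upwards [hae i, hae k] with ω h1 h2
          rcases h1 with h1|h1 <;> rcases h2 with h2|h2 <;> rw [h1, h2] <;> norm_num
      · rw [hred _ k l hkl ?_]
        · exact (SDM_eq_zero (fun h => hkl h.2) (fun h => hkl (h.1.symm.trans h.2))
            (fun h => hkl (h.2.symm.trans h.1))).symm
        · filter_upwards [hae i] with ω h1
          rcases h1 with h1|h1 <;> rw [h1] <;> ring
    · by_cases hkl : k = l
      · subst hkl
        rw [hred _ i j hij ?_]
        · exact (SDM_eq_zero (fun h => hij h.1) (fun h => hij (h.1.trans h.2.symm))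
            (fun h => hij (h.1.trans h.2.symm))).symm
        · filter_upwards [hae k] with ω h1
          rcases h1 with h1|h1 <;> rw [h1] <;> ring
      · by_cases hik : i = k
        · subst hik
          by_cases hjl : j = l
          · subst hjl
            rw [hconst1 _ ?_]
            · exact (SDM_pair2 hij).symm
            · filter_upwards [hae i, hae j] with ω h1 h2
              rcases h1 with h1|h1 <;> rcases h2 with h2|h2 <;> rw [h1, h2] <;> norm_num
          · rw [hred _ j l hjl ?_]
            · exact (SDM_eq_zero (fun h => hij h.1) (fun h => hjl h.2)
                (fun h => hij h.2.symm)).symm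
            · filter_upwards [hae i] with ω h1
              rcases h1 with h1|h1 <;> rw [h1] <;> ring
        · by_cases hil : i = l
          · subst hil
            by_cases hjk : j = k
            · subst hjk
              rw [hconst1 _ ?_]
              · exact (SDM_pair3 hij).symm
              · filter_upwards [hae i, hae j] with ω h1 h2
                rcases h1 with h1|h1 <;> rcases h2 with h2|h2 <;> rw [h1, h2] <;> norm_num
            · rw [hred _ j k hjk ?_]
              · exact (SDM_eq_zero (fun h => hij h.1) (fun h => hik h.1)
                  (fun h => hjk h.2)).symm
              · filter_upwards [hae i] with ω h1
                rcases h1 with h1|h1 <;> rw [h1] <;> ring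
          · by_cases hjk : j = k
            · subst hjk
              rw [hred _ i l hil ?_]
              · exact (SDM_eq_zero (fun h => hij h.1) (fun h => hij h.1)
                  (fun h => hil h.1)).symm
              · filter_upwards [hae j] with ω h1
                rcases h1 with h1|h1 <;> rw [h1] <;> ring
            · by_cases hjl : j = l
              · subst hjl
                rw [hred _ i k hik ?_]
                · exact (SDM_eq_zero (fun h => hij h.1) (fun h => hik h.1)
                    (fun h => hij h.1)).symm
                · filter_upwards [hae j] with ω h1
                  rcases h1 with h1|h1 <;> rw [h1] <;> ring
              · have hI := (hindep.indepFun_mul_mul hmeas i j k l hik hil hjk hjl).integral_fun_mul_eq_mul_integral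
                  ((hmeas i).mul (hmeas j)).aestronglyMeasurable
                  ((hmeas k).mul (hmeas l)).aestronglyMeasurable
                simp only [Pi.mul_apply] at hI
                rw [hI,
                  hE2 i j hij, zero_mul]
                exact (SDM_eq_zero (fun h => hij h.1) (fun h => hik h.1)
                  (fun h => hil h.1)).symm
  -- expand the integrand
  have hpt : ∀ ω, (∑ i, S r i * d i ω * x i) ^ 2 * (∑ i, S r i * d i ω * y i) ^ 2
      = ∑ i, ∑ j, ∑ k, ∑ l,
          ((S r i * x i) * (S r j * x j) * ((S r k * y k) * (S r l * y l)))
            * (d i ω * d j ω * (d k ω * d l ω)) := by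
    intro ω
    rw [SD_expand4]
    exact SD_sum4_congr _ _ fun i j k l => by ring
  rw [integral_congr_ae (Filter.Eventually.of_forall hpt)]
  rw [SD_integral_sum4 μ _ (fun i j k l => (hint4 i j k l).const_mul _)]
  rw [SD_sum4_congr _ (fun i j k l =>
      ((S r i * x i) * (S r j * x j) * ((S r k * y k) * (S r l * y l))) * SDM i j k l)
    (fun i j k l => by rw [MeasureTheory.integral_const_mul, hquad i j k l])]
  rw [SD_comb (fun i => S r i * x i) (fun i => S r i * y i)]
  -- final algebra
  have hn' : (n : ℝ) ≠ 0 := Nat.cast_ne_zero.2 hn.ne'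
  have hS2 : ∀ i, S r i ^ 2 = 1 / (n : ℝ) := by
    intro i
    have h := congrArg (· ^ 2) (hent r i)
    simp only [sq_abs] at h
    rw [h, div_pow, one_pow, Real.sq_sqrt (Nat.cast_nonneg n)]
  have e1 : ∑ i, (S r i * x i) ^ 2 = (1 / (n : ℝ)) * ∑ i, x i ^ 2 := by
    rw [Finset.mul_sum]
    exact Finset.sum_congr rfl fun i _ => by rw [mul_pow, hS2]
  have e2 : ∑ i, (S r i * y i) ^ 2 = (1 / (n : ℝ)) * ∑ i, y i ^ 2 := by
    rw [Finset.mul_sum]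
    exact Finset.sum_congr rfl fun i _ => by rw [mul_pow, hS2]
  have e3 : ∑ i, (S r i * x i) * (S r i * y i) = (1 / (n : ℝ)) * ∑ i, x i * y i := by
    rw [Finset.mul_sum]
    exact Finset.sum_congr rfl fun i _ => by
      rw [show S r i * x i * (S r i * y i) = S r i ^ 2 * (x i * y i) by ring, hS2]
  have e4 : ∑ i, (S r i * x i) ^ 2 * (S r i * y i) ^ 2
      = (1 / (n : ℝ)) ^ 2 * ∑ i, x i ^ 2 * y i ^ 2 := by
    rw [Finset.mul_sum]
    exact Finset.sum_congr rfl fun i _ => by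
      rw [show (S r i * x i) ^ 2 * (S r i * y i) ^ 2 = (S r i ^ 2) ^ 2 * (x i ^ 2 * y i ^ 2)
        by ring, hS2]
  rw [e1, e2, e3, e4]
  field_simp
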